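/- For a binary symmetric channel with crossover probability p ∈ [0,1], the symmetric capacity satisfies I ≤ 1 − Z², where I = 1 + p log₂ p + (1−p) log₂(1−p) and Z = 2√(p(1−p)). -/

import Mathlib

-- cubic upper bound for log on [-2/3, 2/3]
lemma cubic_log_bound (s : ℝ) (h1 : -(2:ℝ)/3 ≤ s) (h2 : s ≤ 2/3) :
    Real.log (1+s) ≤ s - s^2/2 + s^3/3 := by
  set g : ℝ → ℝ := fun t => t - t^2/2 + t^3/3 - Real.log (1+t) with hg
  have hderiv : ∀ t : ℝ, -(2:ℝ)/3 ≤ t → t ≤ 2/3 → HasDerivAt g (t^3/(1+t)) t := by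
    intro t ht1 ht2
    have hpos : (0:ℝ) < 1 + t := by linarith
    have hlog : HasDerivAt (fun u : ℝ => Real.log (1+u)) (1/(1+t)) t := by
      have := ((hasDerivAt_id t).const_add (1:ℝ)).log (ne_of_gt hpos)
      simpa using this
    have hpoly : HasDerivAt (fun u : ℝ => u - u^2/2 + u^3/3) (1 - t + t^2) t := by
      have h := (hasDerivAt_pow 2 t)
      have h3 := (hasDerivAt_pow 3 t)
      have := ((hasDerivAt_id t).sub ((hasDerivAt_pow 2 t).div_const 2)).add
        ((hasDerivAt_pow 3 t).div_const 3)
      refine this.congr_deriv ?_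
      ring
    have := hpoly.sub hlog
    refine this.congr_deriv ?_
    field_simp
    ring
  have hg0 : g 0 = 0 := by simp [hg]
  have key : 0 ≤ g s := by
    rcases le_or_gt 0 s with hs | hs
    · have hmono : MonotoneOn g (Set.Icc (0:ℝ) (2/3)) := by
        apply monotoneOn_of_deriv_nonneg (convex_Icc _ _)
        · intro t ht
          exact ((hderiv t (by linarith [ht.1]) ht.2).continuousAt).continuousWithinAt
        · intro t ht
          rw [interior_Icc] at ht
          exact ((hderiv t (by linarith [ht.1]) (le_of_lt ht.2)).differentiableAt).differentiableWithinAt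
        · intro t ht
          rw [interior_Icc] at ht
          rw [(hderiv t (by linarith [ht.1]) (le_of_lt ht.2)).deriv]
          apply div_nonneg (pow_nonneg (le_of_lt ht.1) 3) (by linarith [ht.1])
      have := hmono (Set.mem_Icc.2 ⟨le_refl 0, by norm_num⟩) (Set.mem_Icc.2 ⟨hs, h2⟩) hs
      linarith [hg0 ▸ this]
    · have hanti : AntitoneOn g (Set.Icc (-(2:ℝ)/3) 0) := by
        apply antitoneOn_of_deriv_nonpos (convex_Icc _ _)
        · intro t ht
          exact ((hderiv t ht.1 (by linarith [ht.2, show (0:ℝ) ≤ 2/3 by norm_num])).continuousAt).continuousWithinAt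
        · intro t ht
          rw [interior_Icc] at ht
          exact ((hderiv t (le_of_lt ht.1) (by linarith [ht.2])).differentiableAt).differentiableWithinAt
        · intro t ht
          rw [interior_Icc] at ht
          rw [(hderiv t (le_of_lt ht.1) (by linarith [ht.2])).deriv]
          have h1t : (0:ℝ) < 1 + t := by linarith [ht.1]
          have : t^3 ≤ 0 := by nlinarith [mul_nonneg (sq_nonneg t) (neg_nonneg.2 (le_of_lt ht.2))]
          exact div_nonpos_of_nonpos_of_nonneg this (le_of_lt h1t)
      have := hanti (Set.mem_Icc.2 ⟨h1, le_of_lt hs⟩) (Set.mem_Icc.2 ⟨by norm_num, le_refl 0⟩) (le_of_lt hs)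
      linarith [hg0 ▸ this]
  have key' : 0 ≤ s - s^2/2 + s^3/3 - Real.log (1+s) := key
  linarith

-- small case: x ≤ 1/6
lemma small_case (x : ℝ) (hx0 : 0 ≤ x) (hx6 : x ≤ 1/6) :
    x * Real.log x + (1-x) * Real.log (1-x) ≤ -(4 * Real.log 2) * (x * (1-x)) := by
  rcases eq_or_lt_of_le hx0 with h | h
  · simp [← h]
  · have hlx : Real.log x ≤ Real.log (1/6) := Real.log_le_log h hx6
    have hl6 : Real.log (1/6 : ℝ) = -Real.log 6 := by
      rw [one_div, Real.log_inv]
    have hl1x : Real.log (1-x) ≤ -x := by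
      have := Real.log_le_sub_one_of_pos (show (0:ℝ) < 1 - x by linarith)
      linarith
    have hlog6 : 4 * Real.log 2 ≤ Real.log 6 + 1 := by
      have h16 : (16:ℝ) ≤ 6 * Real.exp 1 := by nlinarith [Real.exp_one_gt_d9]
      have : Real.log 16 ≤ Real.log (6 * Real.exp 1) := Real.log_le_log (by norm_num) h16
      rw [Real.log_mul (by norm_num) (Real.exp_ne_zero 1), Real.log_exp] at this
      have h416 : Real.log 16 = 4 * Real.log 2 := by
        rw [show (16:ℝ) = 2^4 by norm_num, Real.log_pow]
        push_cast; ring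
      linarith
    have hlog2 : (0:ℝ) < Real.log 2 := Real.log_pos (by norm_num)
    have hlog6pos : (0:ℝ) < Real.log 6 := Real.log_pos (by norm_num)
    have hA : x * Real.log x ≤ x * (-Real.log 6) := by
      apply mul_le_mul_of_nonneg_left _ hx0
      linarith [hl6 ▸ hlx]
    have hB : (1-x) * Real.log (1-x) ≤ (1-x) * (-x) :=
      mul_le_mul_of_nonneg_left hl1x (by linarith)
    nlinarith [mul_nonneg hx0 (show (0:ℝ) ≤ 1 - x by linarith), mul_pos h (show (0:ℝ) < Real.log 6 by exact hlog6pos), mul_nonneg (mul_nonneg hx0 hx0) hlog2.le]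

-- middle case: 1/6 ≤ x ≤ 5/6
lemma mid_case (x : ℝ) (hx1 : 1/6 ≤ x) (hx2 : x ≤ 5/6) :
    x * Real.log x + (1-x) * Real.log (1-x) ≤ -(4 * Real.log 2) * (x * (1-x)) := by
  have hs : -(2:ℝ)/3 ≤ 2*x - 1 := by linarith
  have hs' : 2*x - 1 ≤ 2/3 := by linarith
  have hA := cubic_log_bound (2*x-1) hs hs'
  have hB := cubic_log_bound (1-2*x) (by linarith) (by linarith)
  have hxpos : (0:ℝ) < x := by linarith
  have h1xpos : (0:ℝ) < 1 - x := by linarith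
  have hlx : Real.log x = Real.log (1 + (2*x-1)) - Real.log 2 := by
    rw [show (1:ℝ) + (2*x-1) = 2*x by ring, Real.log_mul (by norm_num) (ne_of_gt hxpos)]
    ring
  have hl1x : Real.log (1-x) = Real.log (1 + (1-2*x)) - Real.log 2 := by
    rw [show (1:ℝ) + (1-2*x) = 2*(1-x) by ring, Real.log_mul (by norm_num) (ne_of_gt h1xpos)]
    ring
  have hA' : Real.log x ≤ (2*x-1) - (2*x-1)^2/2 + (2*x-1)^3/3 - Real.log 2 := by
    rw [hlx]; linarith
  have hB' : Real.log (1-x) ≤ (1-2*x) - (1-2*x)^2/2 + (1-2*x)^3/3 - Real.log 2 := by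
    rw [hl1x]; linarith
  have hAx : x * Real.log x ≤ x * ((2*x-1) - (2*x-1)^2/2 + (2*x-1)^3/3 - Real.log 2) :=
    mul_le_mul_of_nonneg_left hA' (le_of_lt hxpos)
  have hBx : (1-x) * Real.log (1-x) ≤ (1-x) * ((1-2*x) - (1-2*x)^2/2 + (1-2*x)^3/3 - Real.log 2) :=
    mul_le_mul_of_nonneg_left hB' (le_of_lt h1xpos)
  have hu2 : (x - 1/2)^2 ≤ 1/9 := by nlinarith
  have hlog2 : (35:ℝ)/54 ≤ Real.log 2 := by
    have := Real.log_two_gt_d9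
    linarith
  nlinarith [sq_nonneg (x - 1/2), mul_nonneg (sub_nonneg.2 hlog2) (sq_nonneg (x-1/2)),
    mul_le_mul_of_nonneg_left hu2 (mul_nonneg (sub_nonneg.2 hlog2) (sq_nonneg (x-1/2))),
    mul_le_mul_of_nonneg_right hu2 (sq_nonneg (x-1/2))]

lemma key_ineq (x : ℝ) (hx0 : 0 ≤ x) (hx1 : x ≤ 1) :
    x * Real.log x + (1-x) * Real.log (1-x) ≤ -(4 * Real.log 2) * (x * (1-x)) := by
  rcases le_or_gt x (1/6) with h | h
  · exact small_case x hx0 h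
  rcases le_or_gt x (5/6) with h' | h'
  · exact mid_case x (le_of_lt h) h'
  · have := small_case (1-x) (by linarith) (by linarith)
    have e : 1 - (1-x) = x := by ring
    rw [e] at this
    nlinarith [this]

theorem bsc_capacity_le_one_sub_Z_sq (p : ℝ) (hp : p ∈ Set.Icc (0:ℝ) 1)
    (I Z : ℝ) (hI : I = 1 + p * Real.logb 2 p + (1 - p) * Real.logb 2 (1 - p))
    (hZ : Z = 2 * Real.sqrt (p * (1 - p))) :
    I ≤ 1 - Z ^ 2 := by
  obtain ⟨hp0, hp1⟩ := hp
  have hZ2 : Z^2 = 4 * (p * (1-p)) := by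
    rw [hZ, mul_pow, Real.sq_sqrt (by nlinarith)]
    ring
  have hlog2 : (0:ℝ) < Real.log 2 := Real.log_pos (by norm_num)
  have key := key_ineq p hp0 hp1
  have hdiv : (p * Real.log p + (1-p) * Real.log (1-p)) / Real.log 2
      ≤ (-(4 * Real.log 2) * (p * (1-p))) / Real.log 2 :=
    div_le_div_of_nonneg_right key hlog2.le
  have hr : (-(4 * Real.log 2) * (p * (1-p))) / Real.log 2 = -(4 * (p * (1-p))) := by
    field_simp
  rw [hI, hZ2, Real.logb, Real.logb]
  have hl : p * (Real.log p / Real.log 2) + (1-p) * (Real.log (1-p) / Real.log 2)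
      = (p * Real.log p + (1-p) * Real.log (1-p)) / Real.log 2 := by ring
  rw [hr] at hdiv
  linarith [hl ▸ hdiv]
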